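/- Let an agent have an additive valuation v on a finite set M of goods, let n ≥ n' ≥ 1 be integers, and let M' ⊆ M be such that |M \ M'| ≤ n − n'. Then MMS(n', M') ≥ MMS(n, M), where MMS(k, S) denotes the maximin share of the agent for k bundles over the goods in S. -/

import Mathlib

/-- A valuation is additive if the value of a set is the sum of the values of its
singletons. -/
def AdditiveVal {G : Type} [DecidableEq G] (v : Finset G → ℝ) : Prop :=
  ∀ S : Finset G, v S = ∑ g ∈ S, v {g}

/-- The maximin share `MMS v k S`: the maximum, over all partitions of `S` into `k`
(possibly empty) bundles, of the minimum value of a bundle. -/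
noncomputable def MMS {G : Type} [DecidableEq G] (v : Finset G → ℝ) (k : ℕ)
    (S : Finset G) : ℝ :=
  sSup {x : ℝ | ∃ Z : Fin k → Finset G,
    (∀ j j', j ≠ j' → Disjoint (Z j) (Z j')) ∧
    Finset.univ.biUnion Z = S ∧
    x = ⨅ j : Fin k, v (Z j)}

/-- Excluding at least as many agents as goods can only increase the maximin share. -/
theorem mms_monotone_under_reduction
    {G : Type} [DecidableEq G] (M : Finset G)
    (v : Finset G → ℝ)
    (hadd : AdditiveVal v)
    (hpos : ∀ g : G, 0 ≤ v {g})
    (n n' : ℕ) (hn' : 1 ≤ n') (hnn' : n' ≤ n)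
    (M' : Finset G) (hM' : M' ⊆ M)
    (hcard : (M \ M').card ≤ n - n') :
    MMS v n M ≤ MMS v n' M' := by
  classical
  have hmono : ∀ S T : Finset G, S ⊆ T → v S ≤ v T := by
    intro S T hST
    rw [hadd S, hadd T]
    exact Finset.sum_le_sum_of_subset_of_nonneg hST (fun g _ _ => hpos g)
  have hn'ne : Nonempty (Fin n') := ⟨⟨0, hn'⟩⟩
  have hnne : Nonempty (Fin n) := ⟨⟨0, hn'.trans hnn'⟩⟩
  -- the target set is bounded above by v M'
  have hbdd : BddAbove {x : ℝ | ∃ Z : Fin n' → Finset G,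
      (∀ j j', j ≠ j' → Disjoint (Z j) (Z j')) ∧
      Finset.univ.biUnion Z = M' ∧
      x = ⨅ j : Fin n', v (Z j)} := by
    refine ⟨v M', ?_⟩
    rintro x ⟨Z, hdisj, hun, rfl⟩
    have h0 : (⨅ j : Fin n', v (Z j)) ≤ v (Z ⟨0, hn'⟩) :=
      ciInf_le (Set.finite_range _).bddBelow _
    refine h0.trans (hmono _ _ ?_)
    intro g hg
    rw [← hun]
    exact Finset.mem_biUnion.2 ⟨_, Finset.mem_univ _, hg⟩
  -- the source set is nonempty
  have hne : {x : ℝ | ∃ Z : Fin n → Finset G,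
      (∀ j j', j ≠ j' → Disjoint (Z j) (Z j')) ∧
      Finset.univ.biUnion Z = M ∧
      x = ⨅ j : Fin n, v (Z j)}.Nonempty := by
    refine ⟨_, fun j => if j = ⟨0, hn'.trans hnn'⟩ then M else ∅, ?_, ?_, rfl⟩
    · intro j j' hjj'
      by_cases h : j = ⟨0, hn'.trans hnn'⟩
      · have h' : j' ≠ ⟨0, hn'.trans hnn'⟩ := by rw [h] at hjj'; exact hjj'.symm
        simp [h, h']
      · simp [h]
    · ext g
      simp only [Finset.mem_biUnion, Finset.mem_univ, true_and]
      constructor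
      · rintro ⟨j, hj⟩
        by_cases h : j = ⟨0, hn'.trans hnn'⟩ <;> simp [h] at hj
        exact hj
      · intro hg
        exact ⟨⟨0, hn'.trans hnn'⟩, by simp [hg]⟩
  apply csSup_le hne
  rintro x ⟨Z, hdisj, hun, rfl⟩
  -- D: removed goods, T: touched bundles
  set D : Finset G := M \ M' with hD
  set T : Finset (Fin n) := Finset.univ.filter (fun j => ((Z j) ∩ D).Nonempty) with hTdef
  have hTcard : T.card ≤ D.card := by
    have : T.card ≤ (D.image some).card := by
      apply Finset.card_le_card_of_injOn
        (fun j => if h : ((Z j) ∩ D).Nonempty then some h.choose else none)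
      · intro j hj
        rw [hTdef, Finset.coe_filter, Set.mem_setOf_eq] at hj; beta_reduce
        rw [dif_pos hj.2]
        exact Finset.mem_image_of_mem some (Finset.mem_inter.1 hj.2.choose_spec).2
      · intro j hj j' hj' heq
        rw [hTdef, Finset.coe_filter, Set.mem_setOf_eq] at hj hj'
        simp only [dif_pos hj.2, dif_pos hj'.2, Option.some.injEq] at heq
        by_contra hne'
        have h1 := (Finset.mem_inter.1 hj.2.choose_spec).1
        have h2 := (Finset.mem_inter.1 hj'.2.choose_spec).1
        rw [heq] at h1
        exact absurd ((hdisj j j' hne').le_bot (Finset.mem_inter.2 ⟨h1, h2⟩)) (Finset.notMem_empty _)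
    refine this.trans (le_of_eq ?_)
    exact Finset.card_image_of_injective D (Option.some_injective G)
  have hDcard : D.card ≤ n - n' := hcard
  set U : Finset (Fin n) := Finset.univ \ T with hUdef
  have hUcard : n' ≤ U.card := by
    have h1 : U.card = n - T.card := by
      rw [hUdef, Finset.card_sdiff_of_subset (Finset.subset_univ T)]
      simp
    omega
  obtain ⟨U', hU'sub, hU'card⟩ := Finset.exists_subset_card_eq hUcard
  set e := U'.equivFinOfCardEq hU'card with he
  set f : Fin n' → Fin n := fun j => (e.symm j : Fin n) with hf
  have hfinj : Function.Injective f := by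
    intro a b hab
    exact e.symm.injective (Subtype.ext hab)
  have hfU : ∀ j, f j ∈ U := fun j => hU'sub (e.symm j).2
  have hZM : ∀ j : Fin n, Z j ⊆ M := by
    intro j g hg
    rw [← hun]
    exact Finset.mem_biUnion.2 ⟨j, Finset.mem_univ _, hg⟩
  have hsub : ∀ j : Fin n', Z (f j) ⊆ M' := by
    intro j g hg
    have hU' := hfU j
    rw [hUdef, Finset.mem_sdiff, hTdef, Finset.mem_filter] at hU'
    have hnot : ¬ ((Z (f j)) ∩ D).Nonempty := fun h => hU'.2 ⟨Finset.mem_univ _, h⟩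
    by_contra hgM'
    exact hnot ⟨g, Finset.mem_inter.2 ⟨hg, Finset.mem_sdiff.2 ⟨hZM _ hg, hgM'⟩⟩⟩
  set j0 : Fin n' := ⟨0, hn'⟩ with hj0
  set R : Finset G := M' \ Finset.univ.biUnion (fun j : Fin n' => Z (f j)) with hR
  set W : Fin n' → Finset G := fun j => if j = j0 then Z (f j) ∪ R else Z (f j) with hW
  have hRdisj : ∀ j : Fin n', Disjoint R (Z (f j)) := by
    intro j
    rw [Finset.disjoint_left]
    intro g hg hg'
    rw [hR, Finset.mem_sdiff] at hg
    exact hg.2 (Finset.mem_biUnion.2 ⟨j, Finset.mem_univ _, hg'⟩)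
  have hW0 : W j0 = Z (f j0) ∪ R := by simp only [hW, if_pos rfl]
  have hWne : ∀ j, j ≠ j0 → W j = Z (f j) := by
    intro j h; simp only [hW, if_neg h]
  have hWdisj : ∀ j j', j ≠ j' → Disjoint (W j) (W j') := by
    intro j j' hjj'
    have hz : Disjoint (Z (f j)) (Z (f j')) := hdisj _ _ (fun h => hjj' (hfinj h))
    by_cases h : j = j0
    · have h' : j' ≠ j0 := by rw [h] at hjj'; exact hjj'.symm
      subst h
      rw [hW0, hWne j' h']
      exact Finset.disjoint_union_left.2 ⟨hz, hRdisj j'⟩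
    · by_cases h' : j' = j0
      · subst h'
        rw [hW0, hWne j h]
        exact Finset.disjoint_union_right.2 ⟨hz, (hRdisj j).symm⟩
      · rw [hWne j h, hWne j' h']
        exact hz
  have hWsub : ∀ j, Z (f j) ⊆ W j := by
    intro j
    by_cases h : j = j0
    · subst h; rw [hW0]; exact Finset.subset_union_left
    · rw [hWne j h]
  have hWun : Finset.univ.biUnion W = M' := by
    ext g
    simp only [Finset.mem_biUnion, Finset.mem_univ, true_and]
    constructor
    · rintro ⟨j, hj⟩
      by_cases h : j = j0
      · subst h
        rw [hW0, Finset.mem_union] at hj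
        rcases hj with hj | hj
        · exact hsub _ hj
        · rw [hR, Finset.mem_sdiff] at hj; exact hj.1
      · rw [hWne j h] at hj
        exact hsub _ hj
    · intro hg
      by_cases h : ∃ j : Fin n', g ∈ Z (f j)
      · obtain ⟨j, hj⟩ := h
        exact ⟨j, hWsub j hj⟩
      · refine ⟨j0, ?_⟩
        rw [hW0, Finset.mem_union]
        right
        rw [hR, Finset.mem_sdiff]
        refine ⟨hg, fun hc => ?_⟩
        obtain ⟨j, _, hj⟩ := Finset.mem_biUnion.1 hc
        exact h ⟨j, hj⟩
  have hval : (⨅ j : Fin n, v (Z j)) ≤ ⨅ j : Fin n', v (W j) := by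
    apply le_ciInf
    intro j
    have h1 : (⨅ j : Fin n, v (Z j)) ≤ v (Z (f j)) :=
      ciInf_le (Set.finite_range _).bddBelow _
    exact h1.trans (hmono _ _ (hWsub j))
  refine hval.trans (le_csSup hbdd ?_)
  exact ⟨W, hWdisj, hWun, rfl⟩
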